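/- Let X be a set, let * be a commutative binary operation on X, and let • be a binary operation in ZBin(X). Then the product (X,*) □ (X,•), given by x □ y = (x * y) • (y * x), is again a commutative binary operation; in fact x □ y = x * y for all x, y in X. Hence the collection Ab(X) of commutative binary operations on X satisfies Ab(X) □ ZBin(X) ⊆ Ab(X), i.e., Ab(X) is a right ideal of ZBin(X). -/
import Mathlib

/-- The product of two binary operations on `X`:
`x □ y := (x * y) • (y * x)` where `f` plays the role of `*` and `g` of `•`. -/
def box {X : Type*} (f g : X → X → X) : X → X → X :=
  fun x y => g (f x y) (f y x)

/-- A binary operation `•` is in the center `ZBin(X)` if for every binary operation `*`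
and all `x, y`, `(x * y) • (y * x) = (x • y) * (y • x)`. -/
def ZBin {X : Type*} (bullet : X → X → X) : Prop :=
  ∀ star : X → X → X, ∀ x y : X,
    bullet (star x y) (star y x) = star (bullet x y) (bullet y x)

/-- If `*` is commutative and `• ∈ ZBin(X)`, then `(X,*) □ (X,•)` coincides with `*`
(so it is commutative): `Ab(X)` is a right ideal of `ZBin(X)`. -/
theorem Ab_right_ideal_ZBin {X : Type*} (star bullet : X → X → X)
    (hcomm : ∀ x y : X, star x y = star y x) (hz : ZBin bullet) :
    (∀ x y : X, box star bullet x y = star x y) ∧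
    (∀ x y : X, box star bullet x y = box star bullet y x) := by
  have hidem : ∀ a : X, bullet a a = a := fun a => hz (fun _ _ => a) a a
  have h1 : ∀ x y : X, box star bullet x y = star x y := by
    intro x y
    simp only [box, ← hcomm x y, hidem]
  exact ⟨h1, fun x y => by rw [h1, h1, hcomm]⟩
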